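/- arXiv:math/0112007 — 2 statements merged into one kernel-verified Lean document; each statement's English description precedes it below -/
import Mathlib

section
/- Let Σ be a Fano fan of dimension n and x ∈ G(Σ). Then x is contained in at most three primitive collections of Σ of order two. Consequently, for the irreducible invariant divisor D = V(x) of X = X_Σ, whose Picard number equals ρ_D = #{y ∈ G(Σ) : y ≠ x and ⟨x,y⟩ ∈ Σ} − (n−1), one has 0 ≤ ρ_X − ρ_D ≤ 3; moreover ρ_X − ρ_D equals exactly the number of primitive collections of order two containing x. -/
open Finset

namespace ToricFano

/-- The lattice `N ≅ ℤⁿ`. -/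
abbrev NZ (n : ℕ) := Fin n → ℤ
/-- The rational vector space `N_ℚ ≅ ℚⁿ`. -/
abbrev NQ (n : ℕ) := Fin n → ℚ

/-- The canonical map `N → N_ℚ`. -/
def toQ {n : ℕ} (v : NZ n) : NQ n := fun i => (v i : ℚ)

/-- The cone (set of nonnegative rational combinations) spanned by a finite set of
lattice points. -/
def coneSpan {n : ℕ} (s : Finset (NZ n)) : Set (NQ n) :=
  { p | ∃ c : NZ n → ℚ, (∀ v, 0 ≤ c v) ∧ p = ∑ v ∈ s, c v • toQ v }

/-- The relative interior of the cone spanned by a finite set of lattice points. -/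
def relInt {n : ℕ} (s : Finset (NZ n)) : Set (NQ n) :=
  { p | ∃ c : NZ n → ℚ, (∀ v ∈ s, 0 < c v) ∧ p = ∑ v ∈ s, c v • toQ v }

/-- A smooth complete fan of dimension `n`, encoded combinatorially: a cone is recorded
as the finite set of the primitive generators of its rays. -/
structure Fan (n : ℕ) where
  gens : Finset (NZ n)
  cones : Finset (Finset (NZ n))
  empty_mem : ∅ ∈ cones
  cones_subset : ∀ σ ∈ cones, σ ⊆ gens
  gens_mem : ∀ x ∈ gens, ({x} : Finset (NZ n)) ∈ cones
  downward : ∀ σ ∈ cones, ∀ τ ⊆ σ, τ ∈ cones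
  smooth : ∀ σ ∈ cones, ∃ B : Module.Basis (Fin n) ℤ (NZ n), (σ : Set (NZ n)) ⊆ Set.range B
  inter : ∀ σ ∈ cones, ∀ τ ∈ cones, coneSpan σ ∩ coneSpan τ = coneSpan (σ ∩ τ)
  complete : ∀ p : NQ n, ∃ σ ∈ cones, p ∈ coneSpan σ

/-- `P` is a primitive collection: a set of generators not spanning a cone, every proper
subset of which spans a cone. -/
def IsPrimColl {n : ℕ} (F : Fan n) (P : Finset (NZ n)) : Prop :=
  P ⊆ F.gens ∧ P ∉ F.cones ∧ ∀ Q ⊂ P, Q ∈ F.cones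

/-- The primitive relation of the primitive collection `P`: `σ` is the unique cone of the
fan whose relative interior contains `∑ P`, and `a` records the (positive) coefficients,
so that `∑_{v∈P} v = ∑_{v∈σ} a v • v`. -/
def IsPrimRel {n : ℕ} (F : Fan n) (P σ : Finset (NZ n)) (a : NZ n → ℕ) : Prop :=
  IsPrimColl F P ∧ σ ∈ F.cones ∧ (∀ v, v ∉ σ → a v = 0) ∧ (∀ v ∈ σ, 0 < a v) ∧
    ∑ v ∈ P, v = ∑ v ∈ σ, (a v : ℤ) • v

/-- The degree of the primitive relation with collection `P`, cone `σ`, coefficients `a`. -/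
def prDegree {n : ℕ} (P σ : Finset (NZ n)) (a : NZ n → ℕ) : ℤ :=
  (P.card : ℤ) - ∑ v ∈ σ, (a v : ℤ)

/-- A complete smooth fan is Fano when the convex hull of the generators is a polytope
with vertex set exactly the generators whose face fan is the fan itself: equivalently,
for each maximal cone the linear functional taking value `1` on its generators takes
values `< 1` on all other generators. -/
def IsFano {n : ℕ} (F : Fan n) : Prop :=
  ∀ σ ∈ F.cones, σ.card = n →
    ∃ u : NQ n →ₗ[ℚ] ℚ, (∀ v ∈ σ, u (toQ v) = 1) ∧
      ∀ z ∈ F.gens, z ∉ σ → u (toQ z) < 1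

/-- An integral/rational relation among the generators, i.e. an element of `A₁(Σ) ⊗ ℚ`. -/
def IsRel {n : ℕ} (F : Fan n) (r : NZ n → ℚ) : Prop :=
  (∀ v, v ∉ F.gens → r v = 0) ∧ ∑ v ∈ F.gens, r v • toQ v = 0

/-- The relation attached to a wall (an `(n-1)`-dimensional cone) of the fan. -/
def IsWallRel {n : ℕ} (F : Fan n) (r : NZ n → ℚ) : Prop :=
  ∃ ω ∈ F.cones, ω.card = n - 1 ∧ ∃ u u' : NZ n, u ≠ u' ∧ u ∉ ω ∧ u' ∉ ω ∧
    insert u ω ∈ F.cones ∧ insert u' ω ∈ F.cones ∧ IsRel F r ∧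
    r u = 1 ∧ r u' = 1 ∧ ∀ v, v ∉ insert u (insert u' ω) → r v = 0

/-- The Mori cone `NE(Σ)`: the convex cone generated by the wall relations. -/
def NECone {n : ℕ} (F : Fan n) : Set (NZ n → ℚ) :=
  { r | ∃ (k : ℕ) (c : Fin k → ℚ) (w : Fin k → (NZ n → ℚ)),
      (∀ i, 0 ≤ c i) ∧ (∀ i, IsWallRel F (w i)) ∧ r = ∑ i, c i • w i }

/-- A class is extremal if it spans a one-dimensional face of `NE(Σ)`. -/
def IsExtremal {n : ℕ} (F : Fan n) (r : NZ n → ℚ) : Prop :=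
  r ∈ NECone F ∧ ∀ s ∈ NECone F, ∀ t ∈ NECone F, r = s + t →
    (∃ c : ℚ, 0 ≤ c ∧ s = c • r) ∧ ∃ c : ℚ, 0 ≤ c ∧ t = c • r

/-- The numerical class associated to the primitive relation with collection `P` and
coefficients `a` (1 on the elements of `P`, `-a` on the right-hand side). -/
def primRelClass {n : ℕ} (P : Finset (NZ n)) (a : NZ n → ℕ) : NZ n → ℚ :=
  fun v => (if v ∈ P then (1 : ℚ) else 0) - (a v : ℚ)

/-- `FX` refines `FY`: every cone of `FY` is a union of cones of `FX`. -/
def Refines {n : ℕ} (FX FY : Fan n) : Prop :=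
  ∀ τ ∈ FY.cones, ∃ S : Finset (Finset (NZ n)), S ⊆ FX.cones ∧
    coneSpan τ = ⋃ σ ∈ S, coneSpan σ

/-- The combinatorial star subdivision at `τ` of a collection of (smooth simplicial)
cones: insert the new ray through `∑ τ` and subdivide every cone containing `τ`. -/
def starSubCones {n : ℕ} (D : Finset (Finset (NZ n))) (τ : Finset (NZ n)) :
    Finset (Finset (NZ n)) :=
  D.filter (fun σ => ¬ τ ⊆ σ) ∪
    (D.filter (fun μ => ¬ τ ⊆ μ ∧ μ ∪ τ ∈ D)).image (insert (∑ v ∈ τ, v))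

/-- `F'` is the star subdivision of `F` at a cone of dimension at least 2;
it corresponds to the blow-up of the toric variety along an invariant subvariety. -/
def IsStarSubFan {n : ℕ} (F' F : Fan n) : Prop :=
  ∃ τ ∈ F.cones, 2 ≤ τ.card ∧
    F'.gens = insert (∑ v ∈ τ, v) F.gens ∧
    F'.cones = starSubCones F.cones τ

/-- Projectivity of a complete fan: existence of a strictly convex support function,
linear on each maximal cone. -/
def IsProjective {n : ℕ} (F : Fan n) : Prop :=
  ∃ φ : NQ n → ℚ, ∀ σ ∈ F.cones, σ.card = n →
    ∃ u : NQ n →ₗ[ℚ] ℚ, (∀ p ∈ coneSpan σ, φ p = u p) ∧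
      ∀ p, p ∉ coneSpan σ → φ p < u p

/-- A primitive relation is contractible if the fan has Reid's wall-geometry around it
(equivalently, the class admits an equivariant contraction). -/
def IsContractible {n : ℕ} (F : Fan n) (P σ : Finset (NZ n)) (a : NZ n → ℕ) : Prop :=
  IsPrimRel F P σ a ∧
    ∀ ν ∈ F.cones, (σ ∪ ν) ∈ F.cones → (∀ z ∈ ν, z ∉ P ∧ z ∉ σ) →
      ∀ x ∈ P, ((P.erase x) ∪ σ ∪ ν) ∈ F.cones

end ToricFano

namespace ToricFano

noncomputable def toQL (n : ℕ) : NZ n →ₗ[ℤ] NQ n where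
  toFun := toQ
  map_add' a b := by funext i; simp [toQ]
  map_smul' c a := by funext i; simp [toQ]

lemma toQ_inj {n : ℕ} : Function.Injective (toQ (n := n)) := by
  intro a b h; funext i; have := congrFun h i; simpa [toQ] using this

lemma toQ_add {n : ℕ} (a b : NZ n) : toQ (a + b) = toQ a + toQ b := by
  funext i; simp [toQ]

lemma toQ_zero {n : ℕ} : toQ (0 : NZ n) = 0 := by funext i; simp [toQ]

lemma toQ_eq_zero {n : ℕ} {a : NZ n} (h : toQ a = 0) : a = 0 :=
  toQ_inj (by rw [h, toQ_zero])

lemma toQ_zsmul {n : ℕ} (c : ℤ) (a : NZ n) : toQ (c • a) = (c : ℚ) • toQ a := by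
  funext i; simp [toQ]

lemma toQ_sum {n : ℕ} {ι : Type*} (s : Finset ι) (f : ι → NZ n) :
    toQ (∑ v ∈ s, f v) = ∑ v ∈ s, toQ (f v) := by
  classical
  induction s using Finset.induction with
  | empty => simp [toQ_zero]
  | insert _ _ h ih => rw [Finset.sum_insert h, Finset.sum_insert h, toQ_add, ih]

noncomputable def ratBasis {n : ℕ} (B : Module.Basis (Fin n) ℤ (NZ n)) : Module.Basis (Fin n) ℚ (NQ n) := by
  have hli : LinearIndependent ℚ (fun i => toQ (B i)) := by
    rw [← LinearIndependent.iff_fractionRing ℤ ℚ]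
    exact LinearIndependent.map' B.linearIndependent (toQL n)
      (by rw [LinearMap.ker_eq_bot]; exact toQ_inj)
  exact Module.Basis.mk hli <| by
    rw [hli.span_eq_top_of_card_eq_finrank' (by simp [Module.finrank_fintype_fun_eq_card])]

lemma ratBasis_apply {n : ℕ} (B : Module.Basis (Fin n) ℤ (NZ n)) (i : Fin n) :
    ratBasis B i = toQ (B i) := by
  simp [ratBasis, Module.Basis.mk_apply]

lemma ratBasis_repr_toQ {n : ℕ} (B : Module.Basis (Fin n) ℤ (NZ n)) (p : NZ n) (i : Fin n) :
    (ratBasis B).repr (toQ p) i = (B.repr p i : ℚ) := by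
  have h : toQ p = ∑ j, ((B.repr p j : ℚ)) • ratBasis B j := by
    conv_lhs => rw [← B.sum_repr p]
    rw [toQ_sum]
    congr 1
    funext j
    rw [ratBasis_apply, toQ_zsmul]
  rw [h, Module.Basis.repr_sum_self]

/-- coordinates of an element represented by coefficients supported on σ. -/
lemma coords_of_rep {n : ℕ} (B : Module.Basis (Fin n) ℤ (NZ n)) (σ : Finset (NZ n))
    (hσB : (σ : Set (NZ n)) ⊆ Set.range B) (c : NZ n → ℚ) (p : NQ n)
    (hp : p = ∑ v ∈ σ, c v • toQ v) (i : Fin n) :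
    (ratBasis B).repr p i = if B i ∈ σ then c (B i) else 0 := by
  classical
  have hBinj : Function.Injective B := B.injective
  have hσeq : σ = (Finset.univ.filter (fun j => B j ∈ σ)).image B := by
    ext v
    constructor
    · intro hv
      obtain ⟨j, hj⟩ := hσB hv
      exact Finset.mem_image.2 ⟨j, by simpa [hj] using hv, hj⟩
    · intro hv
      obtain ⟨j, hj, rfl⟩ := Finset.mem_image.1 hv
      exact (Finset.mem_filter.1 hj).2
  have h2 : p = ∑ j, (if B j ∈ σ then c (B j) else 0) • ratBasis B j := by
    rw [hp]
    conv_lhs => rw [hσeq]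
    rw [Finset.sum_image (fun a _ b _ h => hBinj h)]
    rw [← Finset.sum_filter_add_sum_filter_not Finset.univ (fun j => B j ∈ σ)
      (fun j => (if B j ∈ σ then c (B j) else 0) • ratBasis B j)]
    have hz : ∑ j ∈ Finset.univ.filter (fun j => ¬ B j ∈ σ),
        (if B j ∈ σ then c (B j) else 0) • ratBasis B j = 0 := by
      apply Finset.sum_eq_zero
      intro j hj
      rw [if_neg (Finset.mem_filter.1 hj).2, zero_smul]
    rw [hz, add_zero]
    apply Finset.sum_congr rfl
    intro j hj
    rw [if_pos (Finset.mem_filter.1 hj).2, ratBasis_apply]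
  rw [h2, Module.Basis.repr_sum_self]


section FanLemmas

variable {n : ℕ} (F : Fan n)

lemma coneSpan_empty_eq : coneSpan (∅ : Finset (NZ n)) = {0} := by
  ext p
  constructor
  · rintro ⟨c, -, rfl⟩; simp
  · rintro rfl; exact ⟨0, fun v => le_rfl, by simp⟩

lemma sum_mem_coneSpan (σ : Finset (NZ n)) (c : NZ n → ℚ) (hc : ∀ v, 0 ≤ c v) :
    (∑ v ∈ σ, c v • toQ v) ∈ coneSpan σ := ⟨c, hc, rfl⟩

lemma toQ_mem_coneSpan_single (a : NZ n) : toQ a ∈ coneSpan ({a} : Finset (NZ n)) := by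
  refine ⟨fun v => if v = a then 1 else 0, fun v => by positivity, ?_⟩
  simp

lemma smul_toQ_mem_coneSpan_single (a : NZ n) (q : ℚ) (hq : 0 ≤ q) :
    q • toQ a ∈ coneSpan ({a} : Finset (NZ n)) := by
  refine ⟨fun v => if v = a then q else 0, fun v => by dsimp only; split <;> simp [hq], ?_⟩
  simp

lemma toQ_add_mem_coneSpan_pair {a b : NZ n} (hab : a ≠ b) :
    toQ (a + b) ∈ coneSpan ({a, b} : Finset (NZ n)) := by
  classical
  refine ⟨fun v => if v = a ∨ v = b then 1 else 0, fun v => by dsimp only; split <;> simp, ?_⟩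
  rw [Finset.sum_pair hab, toQ_add]
  simp [hab]

lemma eq_zero_of_mem_coneSpan_disjoint {σ τ : Finset (NZ n)} (hσ : σ ∈ F.cones)
    (hτ : τ ∈ F.cones) (hdisj : σ ∩ τ = ∅) {p : NQ n}
    (hp : p ∈ coneSpan σ) (hq : p ∈ coneSpan τ) : p = 0 := by
  have h := F.inter σ hσ τ hτ
  have : p ∈ coneSpan (σ ∩ τ) := by rw [← h]; exact ⟨hp, hq⟩
  rw [hdisj, coneSpan_empty_eq] at this
  exact this

lemma gens_ne_zero {x : NZ n} (hx : x ∈ F.gens) : x ≠ 0 := by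
  obtain ⟨B, hB⟩ := F.smooth {x} (F.gens_mem x hx)
  obtain ⟨i, hi⟩ := hB (show x ∈ (({x} : Finset (NZ n)) : Set (NZ n)) by simp)
  rw [← hi]
  exact B.ne_zero i

lemma gens_primitive {x : NZ n} (hx : x ∈ F.gens) (c : ℤ) (v : NZ n) (h : x = c • v) :
    IsUnit c := by
  obtain ⟨B, hB⟩ := F.smooth {x} (F.gens_mem x hx)
  obtain ⟨i, hi⟩ := hB (show x ∈ (({x} : Finset (NZ n)) : Set (NZ n)) by simp)
  have h1 : B.repr x i = 1 := by rw [← hi]; simp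
  have h2 : B.repr x i = c * B.repr v i := by
    calc B.repr x i = B.repr (c • v) i := by rw [h]
      _ = (c • B.repr v) i := by rw [map_smul]
      _ = c * B.repr v i := rfl
  exact IsUnit.of_mul_eq_one (a := c) (B.repr v i) (by rw [← h2, h1])

lemma gen_mem_of_mem_coneSpan {σ : Finset (NZ n)} (hσ : σ ∈ F.cones) {g : NZ n}
    (hg : g ∈ F.gens) (h : toQ g ∈ coneSpan σ) : g ∈ σ := by
  classical
  by_contra hgs
  have hdisj : ({g} : Finset (NZ n)) ∩ σ = ∅ := by
    simp [Finset.singleton_inter_of_notMem hgs]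
  have h0 := eq_zero_of_mem_coneSpan_disjoint F (F.gens_mem g hg) hσ hdisj
    (toQ_mem_coneSpan_single g) h
  exact gens_ne_zero F hg (toQ_eq_zero h0)

lemma pair_sum_ne_zero {a b : NZ n} (h2 : ({a, b} : Finset (NZ n)) ∈ F.cones) (hab : a ≠ b) :
    a + b ≠ 0 := by
  obtain ⟨B, hB⟩ := F.smooth _ h2
  obtain ⟨i, hi⟩ := hB (show a ∈ (({a, b} : Finset (NZ n)) : Set (NZ n)) by simp)
  obtain ⟨j, hj⟩ := hB (show b ∈ (({a, b} : Finset (NZ n)) : Set (NZ n)) by simp)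
  have hij : i ≠ j := fun hh => hab (by rw [← hi, ← hj, hh])
  intro h0
  have := congrArg (fun z => B.repr z i) h0
  simp only [map_add, map_zero, Finsupp.coe_zero, Pi.zero_apply, Finsupp.add_apply] at this
  rw [← hi, ← hj] at this
  simp [Module.Basis.repr_self, Finsupp.single_apply, hij.symm] at this

lemma pair_sum_not_gen {a b : NZ n} (h2 : ({a, b} : Finset (NZ n)) ∈ F.cones) (hab : a ≠ b)
    (hg : a + b ∈ F.gens) : False := by
  have hmem := gen_mem_of_mem_coneSpan F h2 hg (toQ_add_mem_coneSpan_pair hab)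
  have ha : a ∈ F.gens := F.cones_subset _ h2 (by simp)
  have hb : b ∈ F.gens := F.cones_subset _ h2 (by simp)
  rcases Finset.mem_insert.1 hmem with h | h
  · exact gens_ne_zero F hb (add_eq_left.1 h)
  · rw [Finset.mem_singleton] at h
    have h' : b + a = b := by rw [add_comm]; exact h
    exact gens_ne_zero F ha (add_eq_left.1 h')

lemma cone_card_le {σ : Finset (NZ n)} (hσ : σ ∈ F.cones) : σ.card ≤ n := by
  classical
  obtain ⟨B, hB⟩ := F.smooth σ hσ
  have hσeq : σ ⊆ (Finset.univ.filter (fun j => B j ∈ σ)).image B := by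
    intro v hv
    obtain ⟨j, hj⟩ := hB hv
    exact Finset.mem_image.2 ⟨j, by simpa [hj] using hv, hj⟩
  calc σ.card ≤ ((Finset.univ.filter (fun j => B j ∈ σ)).image B).card :=
        Finset.card_le_card hσeq
    _ ≤ (Finset.univ.filter (fun j => B j ∈ σ)).card := Finset.card_image_le
    _ ≤ (Finset.univ : Finset (Fin n)).card := Finset.card_le_card (Finset.filter_subset _ _)
    _ = n := by simp

end FanLemmas

section ConeGeom

variable {n : ℕ} (F : Fan n)

lemma cone_eq_image (B : Module.Basis (Fin n) ℤ (NZ n)) {σ : Finset (NZ n)}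
    (hσB : (σ : Set (NZ n)) ⊆ Set.range B) :
    σ = (Finset.univ.filter (fun j => B j ∈ σ)).image B := by
  classical
  ext v
  constructor
  · intro hv
    obtain ⟨j, hj⟩ := hσB hv
    exact Finset.mem_image.2 ⟨j, by simpa [hj] using hv, hj⟩
  · intro hv
    obtain ⟨j, hj, rfl⟩ := Finset.mem_image.1 hv
    exact (Finset.mem_filter.1 hj).2

lemma mem_coneSpan_of_coords (B : Module.Basis (Fin n) ℤ (NZ n)) {σ : Finset (NZ n)}
    (hσB : (σ : Set (NZ n)) ⊆ Set.range B) (p : NQ n)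
    (h1 : ∀ i, B i ∈ σ → 0 ≤ (ratBasis B).repr p i)
    (h2 : ∀ i, B i ∉ σ → (ratBasis B).repr p i = 0) :
    p ∈ coneSpan σ := by
  classical
  set c : NZ n → ℚ :=
    fun v => ∑ j ∈ Finset.univ.filter (fun j => B j = v), (ratBasis B).repr p j with hc
  have hcB : ∀ i : Fin n, c (B i) = (ratBasis B).repr p i := by
    intro i
    have : Finset.univ.filter (fun j => B j = B i) = {i} := by
      ext j
      simp [B.injective.eq_iff]
    rw [hc]
    simp only [this, Finset.sum_singleton]
  refine ⟨c, ?_, ?_⟩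
  · intro v
    apply Finset.sum_nonneg
    intro j hj
    have hbj : B j = v := (Finset.mem_filter.1 hj).2
    by_cases hv : v ∈ σ
    · exact h1 j (hbj ▸ hv)
    · rw [h2 j (hbj ▸ hv)]
  · have hrepr := (ratBasis B).sum_repr p
    conv_lhs => rw [← hrepr]
    rw [cone_eq_image B hσB, Finset.sum_image (fun a _ b _ h => B.injective h)]
    rw [← Finset.sum_filter_add_sum_filter_not Finset.univ (fun j => B j ∈ σ)
      (fun j => (ratBasis B).repr p j • ratBasis B j)]
    have hz : ∑ j ∈ Finset.univ.filter (fun j => ¬ B j ∈ σ),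
        (ratBasis B).repr p j • ratBasis B j = 0 := by
      apply Finset.sum_eq_zero
      intro j hj
      rw [h2 j (Finset.mem_filter.1 hj).2, zero_smul]
    rw [hz, add_zero]
    apply Finset.sum_congr rfl
    intro j hj
    rw [hcB j, ratBasis_apply]

lemma exists_int_rep {τ : Finset (NZ n)} (hτ : τ ∈ F.cones) (p : NZ n)
    (hp : toQ p ∈ coneSpan τ) :
    ∃ σ' ∈ F.cones, σ' ⊆ τ ∧ ∃ a : NZ n → ℤ,
      (∀ v ∈ σ', 1 ≤ a v) ∧ p = ∑ v ∈ σ', a v • v := by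
  classical
  obtain ⟨B, hB⟩ := F.smooth τ hτ
  obtain ⟨c, hc0, hceq⟩ := hp
  have hco : ∀ i, (ratBasis B).repr (toQ p) i = if B i ∈ τ then c (B i) else 0 :=
    coords_of_rep B τ hB c (toQ p) hceq
  have hkey : ∀ i, ((B.repr p i : ℚ)) = if B i ∈ τ then c (B i) else 0 := by
    intro i; rw [← ratBasis_repr_toQ]; exact hco i
  set J : Finset (Fin n) :=
    Finset.univ.filter (fun j => B j ∈ τ ∧ B.repr p j ≠ 0) with hJ
  set σ' : Finset (NZ n) := J.image B with hσ'
  have hsub : σ' ⊆ τ := by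
    intro v hv
    obtain ⟨j, hj, rfl⟩ := Finset.mem_image.1 hv
    exact ((Finset.mem_filter.1 hj).2).1
  set a : NZ n → ℤ :=
    fun v => ∑ j ∈ Finset.univ.filter (fun j => B j = v), B.repr p j with ha
  have haB : ∀ i : Fin n, a (B i) = B.repr p i := by
    intro i
    have : Finset.univ.filter (fun j => B j = B i) = {i} := by
      ext j; simp [B.injective.eq_iff]
    rw [ha]; simp only [this, Finset.sum_singleton]
  refine ⟨σ', F.downward τ hτ σ' hsub, hsub, a, ?_, ?_⟩
  · intro v hv
    obtain ⟨j, hj, rfl⟩ := Finset.mem_image.1 hv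
    obtain ⟨hjτ, hjne⟩ := (Finset.mem_filter.1 hj).2
    have hge : (0:ℚ) ≤ (B.repr p j : ℚ) := by
      rw [hkey j, if_pos hjτ]; exact hc0 _
    have hge' : 0 ≤ B.repr p j := by exact_mod_cast hge
    rw [haB j]
    omega
  · have hrepr := B.sum_repr p
    conv_lhs => rw [← hrepr]
    rw [hσ', Finset.sum_image (fun a _ b _ h => B.injective h)]
    rw [← Finset.sum_filter_add_sum_filter_not Finset.univ (fun j => j ∈ J)
      (fun j => B.repr p j • B j)]
    have hz : ∑ j ∈ Finset.univ.filter (fun j => ¬ j ∈ J),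
        B.repr p j • B j = 0 := by
      apply Finset.sum_eq_zero
      intro j hj
      have hnj := (Finset.mem_filter.1 hj).2
      rw [hJ] at hnj
      simp only [Finset.mem_filter, Finset.mem_univ, true_and, not_and, not_not] at hnj
      by_cases hjτ : B j ∈ τ
      · rw [hnj hjτ, zero_smul]
      · have : (B.repr p j : ℚ) = 0 := by rw [hkey j, if_neg hjτ]
        have : B.repr p j = 0 := by exact_mod_cast this
        rw [this, zero_smul]
    rw [hz, add_zero]
    have hJJ : Finset.univ.filter (fun j => j ∈ J) = J := by
      ext j; simp
    rw [hJJ]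
    apply Finset.sum_congr rfl
    intro j hj
    rw [haB j]

lemma exists_ssup {σ : Finset (NZ n)} (hσ : σ ∈ F.cones) (hlt : σ.card < n) :
    ∃ τ ∈ F.cones, σ ⊂ τ := by
  classical
  obtain ⟨B, hB⟩ := F.smooth σ hσ
  have hI : ∃ i₀, B i₀ ∉ σ := by
    by_contra hcon
    push_neg at hcon
    have hsub : (Finset.univ.image B) ⊆ σ := by
      intro v hv
      obtain ⟨j, _, rfl⟩ := Finset.mem_image.1 hv
      exact hcon j
    have hcard : n ≤ σ.card := by
      calc n = (Finset.univ : Finset (Fin n)).card := by simp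
        _ = (Finset.univ.image B).card := (Finset.card_image_of_injective _ B.injective).symm
        _ ≤ σ.card := Finset.card_le_card hsub
    omega
  obtain ⟨i₀, hi₀⟩ := hI
  set q : NQ n := ∑ v ∈ σ, (fun _ => (1:ℚ)) v • toQ v with hqdef
  set bb : NQ n := toQ (B i₀) with hbb
  set pp : ℕ → NQ n := fun k => q + (1/((k:ℚ)+1)) • bb with hpp
  have hεpos : ∀ k : ℕ, (0:ℚ) < 1/((k:ℚ)+1) := by
    intro k; positivity
  have hεinj : ∀ k₁ k₂ : ℕ, (1/((k₁:ℚ)+1)) = (1/((k₂:ℚ)+1)) → k₁ = k₂ := by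
    intro k₁ k₂ h
    field_simp at h
    exact_mod_cast (by linarith : (k₁:ℚ) = k₂)
  have hchoice : ∀ k : ℕ, ∃ τ : {t // t ∈ F.cones}, pp k ∈ coneSpan τ.1 := by
    intro k
    obtain ⟨τ, hτ, hm⟩ := F.complete (pp k)
    exact ⟨⟨τ, hτ⟩, hm⟩
  choose g hg using hchoice
  obtain ⟨⟨τ, hτ⟩, hfib⟩ := Finite.exists_infinite_fiber g
  have hA : {k | g k = ⟨τ, hτ⟩}.Infinite := by
    rw [← Set.infinite_coe_iff]; exact hfib
  set A := {k | g k = ⟨τ, hτ⟩} with hAdef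
  have hmemA : ∀ k ∈ A, pp k ∈ coneSpan τ := by
    intro k hk
    have h1 := hg k
    rw [hk] at h1
    exact h1
  obtain ⟨B', hB'⟩ := F.smooth τ hτ
  -- coordinates of pp k with respect to B'
  have hppco : ∀ k ∈ A, ∀ i : Fin n,
      (B' i ∈ τ → 0 ≤ (ratBasis B').repr (pp k) i) ∧
      (B' i ∉ τ → (ratBasis B').repr (pp k) i = 0) := by
    intro k hk i
    obtain ⟨c, hc0, hceq⟩ := hmemA k hk
    have := coords_of_rep B' τ hB' c (pp k) hceq i
    constructor
    · intro hi; rw [this, if_pos hi]; exact hc0 _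
    · intro hi; rw [this, if_neg hi]
  have hlin : ∀ k : ℕ, ∀ i : Fin n, (ratBasis B').repr (pp k) i =
      (ratBasis B').repr q i + (1/((k:ℚ)+1)) * (ratBasis B').repr bb i := by
    intro k i
    rw [hpp]
    simp only [map_add, map_smul, Finsupp.add_apply, Finsupp.smul_apply, smul_eq_mul]
  -- q has nonnegative coords on τ and zero off τ
  have hqco : ∀ i : Fin n, (B' i ∈ τ → 0 ≤ (ratBasis B').repr q i) ∧
      (B' i ∉ τ → (ratBasis B').repr q i = 0) ∧ (ratBasis B').repr bb i *
        (if B' i ∈ τ then 1 else 1) = (ratBasis B').repr bb i := by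
    intro i
    refine ⟨?_, ?_, by simp⟩
    · intro hi
      by_contra hneg
      push_neg at hneg
      set Q := (ratBasis B').repr q i with hQ
      set R := (ratBasis B').repr bb i with hR
      have hAll : ∀ k ∈ A, 0 ≤ Q + (1/((k:ℚ)+1)) * R := by
        intro k hk
        have := (hppco k hk i).1 hi
        rw [hlin k i] at this
        exact this
      have hRpos : 0 < R := by
        obtain ⟨k, hk⟩ := hA.nonempty
        have h1 := hAll k hk
        nlinarith [hεpos k]
      have hbound : ∀ k ∈ A, ((k:ℚ)+1) ≤ R / (-Q) := by
        intro k hk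
        have h1 := hAll k hk
        rw [le_div_iff₀ (by linarith)]
        have hkpos : (0:ℚ) < (k:ℚ)+1 := by positivity
        have h3 := mul_le_mul_of_nonneg_left h1 hkpos.le
        rw [mul_zero, mul_add] at h3
        have h4 : ((k:ℚ)+1) * ((1/((k:ℚ)+1)) * R) = R := by field_simp
        rw [h4] at h3
        rw [mul_neg]
        linarith
      obtain ⟨K, hK⟩ := exists_nat_gt (R / (-Q))
      obtain ⟨k, hk, hKk⟩ := hA.exists_gt K
      have := hbound k hk
      have hcast : (K:ℚ) ≤ (k:ℚ) := by exact_mod_cast hKk.le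
      linarith
    · intro hi
      obtain ⟨k₁, hk₁, k₂, hk₂, hne⟩ := hA.nontrivial
      have e1 := (hppco k₁ hk₁ i).2 hi
      have e2 := (hppco k₂ hk₂ i).2 hi
      rw [hlin k₁ i] at e1
      rw [hlin k₂ i] at e2
      set Q := (ratBasis B').repr q i
      set R := (ratBasis B').repr bb i
      have hεne : (1/((k₁:ℚ)+1)) ≠ (1/((k₂:ℚ)+1)) := fun h => hne (hεinj _ _ h)
      have hR : R = 0 := by
        by_contra hR0
        apply hεne
        have : (1/((k₁:ℚ)+1)) * R = (1/((k₂:ℚ)+1)) * R := by linarith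
        exact mul_right_cancel₀ hR0 this
      rw [hR] at e1
      linarith
  have hqτ : q ∈ coneSpan τ :=
    mem_coneSpan_of_coords B' hB' q (fun i hi => (hqco i).1 hi) (fun i hi => (hqco i).2.1 hi)
  have hqσ : q ∈ coneSpan σ := sum_mem_coneSpan σ (fun _ => (1:ℚ)) (fun v => by norm_num)
  have hqint : q ∈ coneSpan (σ ∩ τ) := by
    rw [← F.inter σ hσ τ hτ]
    exact ⟨hqσ, hqτ⟩
  -- σ ⊆ τ
  have hσsubτ : σ ⊆ τ := by
    intro v hv
    by_contra hvτ
    obtain ⟨i, hi⟩ := hB hv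
    obtain ⟨c', hc'0, hc'eq⟩ := hqint
    have hco1 := coords_of_rep B (σ ∩ τ)
      (by intro w hw; exact hB (by exact Finset.mem_of_mem_inter_left hw)) c' q hc'eq i
    have hco2 := coords_of_rep B σ hB (fun _ => (1:ℚ)) q hqdef i
    rw [if_pos (hi ▸ hv)] at hco2
    rw [if_neg (by rw [Finset.mem_inter]; rintro ⟨-, h2⟩; exact hvτ (hi ▸ h2))] at hco1
    rw [hco1] at hco2
    norm_num at hco2
  -- σ ≠ τ
  have hσneτ : σ ≠ τ := by
    intro heq
    obtain ⟨k, hk⟩ := hA.nonempty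
    have hppk : pp k ∈ coneSpan σ := by rw [heq]; exact hmemA k hk
    obtain ⟨c'', hc''0, hc''eq⟩ := hppk
    have hco := coords_of_rep B σ hB c'' (pp k) hc''eq i₀
    rw [if_neg hi₀] at hco
    have hqi₀ : (ratBasis B).repr q i₀ = 0 := by
      have := coords_of_rep B σ hB (fun _ => (1:ℚ)) q hqdef i₀
      rw [if_neg hi₀] at this
      exact this
    have hbi₀ : (ratBasis B).repr bb i₀ = 1 := by
      rw [hbb, ← ratBasis_apply]
      simp [Module.Basis.repr_self]
    have : (ratBasis B).repr (pp k) i₀ = 1/((k:ℚ)+1) := by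
      rw [hpp]
      simp only [map_add, map_smul, Finsupp.add_apply, Finsupp.smul_apply, smul_eq_mul]
      rw [hqi₀, hbi₀]
      ring
    rw [hco] at this
    exact absurd this.symm (ne_of_gt (hεpos k))
  exact ⟨τ, hτ, Finset.ssubset_iff_subset_ne.2 ⟨hσsubτ, hσneτ⟩⟩

lemma exists_maxcone {σ : Finset (NZ n)} (hσ : σ ∈ F.cones) :
    ∃ τ ∈ F.cones, σ ⊆ τ ∧ τ.card = n := by
  have H : ∀ k, ∀ σ, σ ∈ F.cones → n - σ.card ≤ k →
      ∃ τ ∈ F.cones, σ ⊆ τ ∧ τ.card = n := by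
    intro k
    induction k with
    | zero =>
      intro σ hσ h0
      have h1 := cone_card_le F hσ
      have h2 : σ.card = n := by omega
      exact ⟨σ, hσ, subset_rfl, h2⟩
    | succ k ih =>
      intro σ hσ hk
      by_cases hcn : σ.card = n
      · exact ⟨σ, hσ, subset_rfl, hcn⟩
      · have hlt : σ.card < n := lt_of_le_of_ne (cone_card_le F hσ) hcn
        obtain ⟨τ, hτ, hst⟩ := exists_ssup F hσ hlt
        have hcard := Finset.card_lt_card hst
        obtain ⟨ρ, hρ, hsubρ, hc⟩ := ih τ hτ (by omega)
        exact ⟨ρ, hρ, hst.subset.trans hsubρ, hc⟩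
  exact H n σ hσ (by omega)

lemma prim_sum (hF : IsFano F) {x y : NZ n} (hx : x ∈ F.gens) (hy : y ∈ F.gens)
    (hxy : x ≠ y) (hnc : ({x, y} : Finset (NZ n)) ∉ F.cones) :
    x + y = 0 ∨ x + y ∈ F.gens := by
  classical
  obtain ⟨τ, hτ, hmem⟩ := F.complete (toQ (x + y))
  obtain ⟨σ', hσ', hsub, a, ha1, hrep⟩ := exists_int_rep F hτ _ hmem
  obtain ⟨σ, hσ, hσsub, hcard⟩ := exists_maxcone F hσ'
  obtain ⟨u, hu1, hu2⟩ := hF σ hσ hcard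
  have hb : ∀ g ∈ F.gens, u (toQ g) ≤ 1 := by
    intro g hg
    by_cases hgσ : g ∈ σ
    · exact le_of_eq (hu1 g hgσ)
    · exact le_of_lt (hu2 g hg hgσ)
  have hsum : u (toQ x) + u (toQ y) = ∑ v ∈ σ', (a v : ℚ) := by
    have h1 : toQ (x + y) = ∑ v ∈ σ', (a v : ℚ) • toQ v := by
      rw [hrep, toQ_sum]
      apply Finset.sum_congr rfl
      intro v hv
      rw [toQ_zsmul]
    have h2 := congrArg u h1
    rw [toQ_add, map_add, map_sum] at h2
    rw [h2]
    apply Finset.sum_congr rfl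
    intro v hv
    rw [map_smul, smul_eq_mul, hu1 v (hσsub hv)]
    ring
  have hstrict : u (toQ x) + u (toQ y) < 2 := by
    have hnot : x ∉ σ ∨ y ∉ σ := by
      by_contra hcon
      push_neg at hcon
      apply hnc
      apply F.downward σ hσ
      intro v hv
      rcases Finset.mem_insert.1 hv with rfl | hv
      · exact hcon.1
      · rw [Finset.mem_singleton] at hv; subst hv; exact hcon.2
    rcases hnot with h | h
    · have h1 := hu2 x hx h
      have h2 := hb y hy
      linarith
    · have h1 := hu2 y hy h
      have h2 := hb x hx
      linarith
  have hQZ : ((∑ v ∈ σ', a v : ℤ) : ℚ) < 2 := by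
    push_cast
    rw [← hsum]; exact hstrict
  have hZlt : (∑ v ∈ σ', a v) < 2 := by exact_mod_cast hQZ
  have hcard1 : (σ'.card : ℤ) ≤ ∑ v ∈ σ', a v := by
    calc (σ'.card : ℤ) = ∑ _v ∈ σ', (1:ℤ) := by simp
      _ ≤ _ := Finset.sum_le_sum ha1
  have hσcard1 : σ'.card ≤ 1 := by omega
  by_cases hemp : σ' = ∅
  · left; rw [hrep, hemp, Finset.sum_empty]
  · right
    obtain ⟨z, hz⟩ : ∃ z, σ' = {z} := Finset.card_eq_one.1
      (le_antisymm hσcard1 (Finset.card_pos.2 (Finset.nonempty_of_ne_empty hemp)))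
    have haz : a z = 1 := by
      have h1 : 1 ≤ a z := ha1 z (by rw [hz]; simp)
      have h2 : ∑ v ∈ σ', a v = a z := by rw [hz, Finset.sum_singleton]
      omega
    have hxyz : x + y = z := by rw [hrep, hz, Finset.sum_singleton, haz, one_smul]
    rw [hxyz]
    exact F.cones_subset τ hτ (hsub (by rw [hz]; simp))

end ConeGeom

section Combinatorics

variable {n : ℕ} (F : Fan n)

lemma pair_disjoint {a b c d : NZ n} (h1 : a ≠ c) (h2 : a ≠ d) (h3 : b ≠ c) (h4 : b ≠ d) :
    ({a, b} : Finset (NZ n)) ∩ {c, d} = ∅ := by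
  rw [Finset.eq_empty_iff_forall_notMem]
  intro v hv
  rw [Finset.mem_inter, Finset.mem_insert, Finset.mem_singleton, Finset.mem_insert,
    Finset.mem_singleton] at hv
  obtain ⟨ha, hb⟩ := hv
  rcases ha with rfl | rfl
  · rcases hb with h | h
    · exact h1 h
    · exact h2 h
  · rcases hb with h | h
    · exact h3 h
    · exact h4 h

lemma not_unit_two : ¬ IsUnit (2 : ℤ) := by
  rw [Int.isUnit_iff]; omega

lemma not_unit_negtwo : ¬ IsUnit (-2 : ℤ) := by
  rw [Int.isUnit_iff]; omega

/-- degenerate case in the pair analysis: `x + y₁ = y₂` is impossible for two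
primitive partners. -/
lemma no_deg (hF : IsFano F) {x y₁ y₂ : NZ n} (hx : x ∈ F.gens) (hy₁ : y₁ ∈ F.gens)
    (hy₂ : y₂ ∈ F.gens) (hz₁ : x + y₁ ∈ F.gens) (hz₂ : x + y₂ ∈ F.gens)
    (hdeg : x + y₁ = y₂) : False := by
  have hx0 : x ≠ 0 := gens_ne_zero F hx
  have hz₁0 : x + y₁ ≠ 0 := gens_ne_zero F hz₁
  have hz₂y₁ : x + y₂ ≠ y₁ := by
    intro h
    apply hx0
    funext i
    have a := congrFun hdeg i; have b := congrFun h i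
    simp only [Pi.add_apply, Pi.zero_apply] at a b ⊢
    omega
  have hpz : x + y₂ + y₁ = (x + y₁) + (x + y₁) := by
    funext i; have a := congrFun hdeg i
    simp only [Pi.add_apply] at a ⊢; omega
  by_cases hc : ({x + y₂, y₁} : Finset (NZ n)) ∈ F.cones
  · have hm1 : toQ (x + y₂ + y₁) ∈ coneSpan ({x + y₂, y₁} : Finset (NZ n)) :=
      toQ_add_mem_coneSpan_pair hz₂y₁
    have hm2 : toQ (x + y₂ + y₁) ∈ coneSpan ({x + y₁} : Finset (NZ n)) := by
      rw [hpz, toQ_add]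
      have := smul_toQ_mem_coneSpan_single (x + y₁) 2 (by norm_num)
      rwa [two_smul] at this
    have hne1 : x + y₁ ≠ x + y₂ := by
      intro h
      apply hx0
      funext i
      have a := congrFun hdeg i; have b := congrFun h i
      simp only [Pi.add_apply, Pi.zero_apply] at a b ⊢
      omega
    have hne2 : x + y₁ ≠ y₁ := fun h => hx0 (add_eq_right.1 h)
    have hdisj : ({x + y₁} : Finset (NZ n)) ∩ {x + y₂, y₁} = ∅ := by
      rw [Finset.singleton_inter_of_notMem]
      simp only [Finset.mem_insert, Finset.mem_singleton]
      push_neg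
      exact ⟨hne1, hne2⟩
    have h0 := eq_zero_of_mem_coneSpan_disjoint F (F.gens_mem _ hz₁) hc hdisj hm2 hm1
    apply hz₁0
    have h1 := toQ_eq_zero h0
    funext i
    have a := congrFun h1 i; have b := congrFun hpz i
    simp only [Pi.add_apply, Pi.zero_apply] at a b ⊢
    omega
  · rcases prim_sum F hF hz₂ hy₁ hz₂y₁ hc with h0 | hg
    · apply hz₁0
      funext i
      have a := congrFun h0 i; have b := congrFun hpz i
      simp only [Pi.add_apply, Pi.zero_apply] at a b ⊢
      omega
    · have h2 : x + y₂ + y₁ = (2 : ℤ) • (x + y₁) := by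
        funext i
        have b := congrFun hpz i
        simp only [Pi.add_apply, Pi.smul_apply, smul_eq_mul] at b ⊢
        omega
      exact not_unit_two (gens_primitive F hg 2 (x + y₁) h2)

/-- the pair lemma: for two distinct primitive partners `y₁, y₂` of `x` of z-type,
`x + y₁ + y₂` is `0` or a generator (with one of the natural pairs primitive). -/
lemma pair_sum_cases (hF : IsFano F) {x y₁ y₂ : NZ n} (hx : x ∈ F.gens)
    (hy₁ : y₁ ∈ F.gens) (hy₂ : y₂ ∈ F.gens)
    (h12 : y₁ ≠ y₂)
    (hz₁ : x + y₁ ∈ F.gens) (hz₂ : x + y₂ ∈ F.gens) :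
    x + y₁ + y₂ = 0 ∨ (x + y₁ + y₂ ∈ F.gens ∧
      (({x + y₁, y₂} : Finset (NZ n)) ∉ F.cones ∨
        ({x + y₂, y₁} : Finset (NZ n)) ∉ F.cones)) := by
  have hx0 : x ≠ 0 := gens_ne_zero F hx
  have hy₁0 : y₁ ≠ 0 := gens_ne_zero F hy₁
  have hy₂0 : y₂ ≠ 0 := gens_ne_zero F hy₂
  have hdeg1 : x + y₁ ≠ y₂ := fun h => no_deg F hF hx hy₁ hy₂ hz₁ hz₂ h
  have hdeg2 : x + y₂ ≠ y₁ := fun h => no_deg F hF hx hy₂ hy₁ hz₂ hz₁ h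
  have hz₁z₂ : x + y₁ ≠ x + y₂ := fun h => h12 (by
    funext i; have a := congrFun h i; simp only [Pi.add_apply] at a ⊢; omega)
  have hz₁y₁ : x + y₁ ≠ y₁ := fun h => hx0 (add_eq_right.1 h)
  have hz₂y₂ : x + y₂ ≠ y₂ := fun h => hx0 (add_eq_right.1 h)
  have hmain : ({x + y₁, y₂} : Finset (NZ n)) ∉ F.cones ∨
      ({x + y₂, y₁} : Finset (NZ n)) ∉ F.cones := by
    by_contra hcon
    push_neg at hcon
    obtain ⟨hc1, hc2⟩ := hcon
    have hm1 : toQ (x + y₁ + y₂) ∈ coneSpan ({x + y₁, y₂} : Finset (NZ n)) :=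
      toQ_add_mem_coneSpan_pair hdeg1
    have hm2 : toQ (x + y₁ + y₂) ∈ coneSpan ({x + y₂, y₁} : Finset (NZ n)) := by
      have heq : x + y₁ + y₂ = x + y₂ + y₁ := by
        funext i; simp only [Pi.add_apply]; omega
      rw [heq]
      exact toQ_add_mem_coneSpan_pair hdeg2
    have hdisj : ({x + y₁, y₂} : Finset (NZ n)) ∩ {x + y₂, y₁} = ∅ :=
      pair_disjoint hz₁z₂ hz₁y₁ (fun h => hz₂y₂ h.symm) h12.symm
    have h0 := eq_zero_of_mem_coneSpan_disjoint F hc1 hc2 hdisj hm1 hm2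
    exact pair_sum_ne_zero F hc1 hdeg1 (toQ_eq_zero h0)
  rcases hmain with hpr | hpr
  · rcases prim_sum F hF hz₁ hy₂ hdeg1 hpr with h0 | hg
    · exact Or.inl h0
    · exact Or.inr ⟨hg, Or.inl hpr⟩
  · rcases prim_sum F hF hz₂ hy₁ hdeg2 hpr with h0 | hg
    · left
      funext i
      have a := congrFun h0 i
      simp only [Pi.add_apply, Pi.zero_apply] at a ⊢
      omega
    · right
      constructor
      · have heq : x + y₁ + y₂ = x + y₂ + y₁ := by
          funext i; simp only [Pi.add_apply]; omega
        rwa [heq]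
      · exact Or.inr hpr

/-- if `{x,y}` is a primitive pair with `x + y = z ∈ G`, then `⟨x, z⟩` is a cone. -/
lemma tz_cone (hF : IsFano F) {x y : NZ n} (hx : x ∈ F.gens) (hy : y ∈ F.gens)
    (hxy : x ≠ y) (hnc : ({x, y} : Finset (NZ n)) ∉ F.cones)
    (hz : x + y ∈ F.gens) : ({x, x + y} : Finset (NZ n)) ∈ F.cones := by
  by_contra hnc2
  have hx0 : x ≠ 0 := gens_ne_zero F hx
  have hy0 : y ≠ 0 := gens_ne_zero F hy
  have hz0 : x + y ≠ 0 := gens_ne_zero F hz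
  have hxz : x ≠ x + y := fun h => hy0 (add_eq_left.1 h.symm)
  have hyz : y ≠ x + y := fun h => hx0 (add_eq_right.1 h.symm)
  rcases prim_sum F hF hx hz hxz hnc2 with h0 | hg
  · -- x + (x + y) = 0 : then y = -2x, contradicting primitivity
    have h2 : y = (-2 : ℤ) • x := by
      funext i
      have a := congrFun h0 i
      simp only [Pi.add_apply, Pi.zero_apply, Pi.smul_apply, smul_eq_mul] at a ⊢
      omega
    exact not_unit_negtwo (gens_primitive F hy (-2) x h2)
  · -- second z-type partner `x + y`; pair lemma gives 2(x+y) ∈ {0} ∪ G, absurd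
    rcases pair_sum_cases F hF hx hy hz hyz hz hg with h0 | ⟨hgg, -⟩
    · apply hz0
      funext i
      have a := congrFun h0 i
      simp only [Pi.add_apply, Pi.zero_apply] at a ⊢
      omega
    · have h2 : x + y + (x + y) = (2 : ℤ) • (x + y) := by
        funext i
        simp only [Pi.add_apply, Pi.smul_apply, smul_eq_mul]
        ring
      exact not_unit_two (gens_primitive F hgg 2 (x + y) h2)

/-- auxiliary step for the strong dichotomy, assuming `{x+y₁, y₂}` is not a cone. -/
lemma strong_aux (hF : IsFano F) {x y₁ y₂ : NZ n} (hx : x ∈ F.gens)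
    (hy₁ : y₁ ∈ F.gens) (hy₂ : y₂ ∈ F.gens)
    (hxy₁ : x ≠ y₁) (hxy₂ : x ≠ y₂) (h12 : y₁ ≠ y₂)
    (hp₁ : ({x, y₁} : Finset (NZ n)) ∉ F.cones)
    (hp₂ : ({x, y₂} : Finset (NZ n)) ∉ F.cones)
    (hz₁ : x + y₁ ∈ F.gens) (hz₂ : x + y₂ ∈ F.gens)
    (hw : x + y₁ + y₂ ∈ F.gens)
    (hprim : ({x + y₁, y₂} : Finset (NZ n)) ∉ F.cones) :
    x + y₁ + y₂ = -x := by
  have hx0 : x ≠ 0 := gens_ne_zero F hx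
  have hy₁0 : y₁ ≠ 0 := gens_ne_zero F hy₁
  have hy₂0 : y₂ ≠ 0 := gens_ne_zero F hy₂
  have hdeg1 : x + y₁ ≠ y₂ := fun h => no_deg F hF hx hy₁ hy₂ hz₁ hz₂ h
  have hz₁z₂ : x + y₁ ≠ x + y₂ := fun h => h12 (by
    funext i; have a := congrFun h i; simp only [Pi.add_apply] at a ⊢; omega)
  -- `⟨x+y₁, w⟩` is a cone
  have hzw : ({x + y₁, x + y₁ + y₂} : Finset (NZ n)) ∈ F.cones :=
    tz_cone F hF hz₁ hy₂ hdeg1 hprim hw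
  have hz₁w : x + y₁ ≠ x + y₁ + y₂ := fun h => hy₂0 (add_eq_left.1 h.symm)
  -- subcase w = x is impossible
  have hwx : x + y₁ + y₂ ≠ x := by
    intro h
    have hsum : (x + y₁) + (x + y₂) = x + x := by
      funext i
      have a := congrFun h i
      simp only [Pi.add_apply] at a ⊢
      omega
    have hxz₁ : x ≠ x + y₁ := fun hh => hy₁0 (add_eq_left.1 hh.symm)
    have hxz₂ : x ≠ x + y₂ := fun hh => hy₂0 (add_eq_left.1 hh.symm)
    have hxx0 : x + x ≠ 0 := by
      intro hh
      apply hx0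
      funext i
      have a := congrFun hh i
      simp only [Pi.add_apply, Pi.zero_apply] at a ⊢
      omega
    by_cases hc : ({x + y₁, x + y₂} : Finset (NZ n)) ∈ F.cones
    · have hm1 : toQ ((x + y₁) + (x + y₂)) ∈ coneSpan ({x + y₁, x + y₂} : Finset (NZ n)) :=
        toQ_add_mem_coneSpan_pair hz₁z₂
      have hm2 : toQ ((x + y₁) + (x + y₂)) ∈ coneSpan ({x} : Finset (NZ n)) := by
        rw [hsum, toQ_add]
        have := smul_toQ_mem_coneSpan_single x 2 (by norm_num)
        rwa [two_smul] at this
      have hdisj : ({x} : Finset (NZ n)) ∩ {x + y₁, x + y₂} = ∅ := by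
        rw [Finset.singleton_inter_of_notMem]
        simp only [Finset.mem_insert, Finset.mem_singleton]
        push_neg
        exact ⟨hxz₁, hxz₂⟩
      have h0 := eq_zero_of_mem_coneSpan_disjoint F (F.gens_mem x hx) hc hdisj hm2 hm1
      apply hxx0
      rw [← hsum]
      exact toQ_eq_zero h0
    · rcases prim_sum F hF hz₁ hz₂ hz₁z₂ hc with h0 | hg
      · exact hxx0 (hsum ▸ h0)
      · have h2 : (x + y₁) + (x + y₂) = (2 : ℤ) • x := by
          funext i
          have b := congrFun hsum i
          simp only [Pi.add_apply, Pi.smul_apply, smul_eq_mul] at b ⊢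
          omega
        exact not_unit_two (gens_primitive F (hsum ▸ hg : x + x ∈ F.gens) 2 x
          (by rw [← hsum]; exact h2))
  have hxw : x ≠ x + y₁ + y₂ := fun h => hwx h.symm
  -- `{x, w}` is not a cone
  have hr : x + (x + y₁ + y₂) = (x + y₁) + (x + y₂) := by
    funext i; simp only [Pi.add_apply]; omega
  have hwz₁ : x + y₁ + y₂ ≠ x + y₁ := hz₁w.symm
  have hwz₂ : x + y₁ + y₂ ≠ x + y₂ := by
    intro h
    apply hy₁0
    funext i
    have a := congrFun h i
    simp only [Pi.add_apply, Pi.zero_apply] at a ⊢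
    omega
  have hxz₁' : x ≠ x + y₁ := fun hh => hy₁0 (add_eq_left.1 hh.symm)
  have hxz₂' : x ≠ x + y₂ := fun hh => hy₂0 (add_eq_left.1 hh.symm)
  have hncxw : ({x, x + y₁ + y₂} : Finset (NZ n)) ∉ F.cones := by
    intro hc
    by_cases hc2 : ({x + y₁, x + y₂} : Finset (NZ n)) ∈ F.cones
    · have hm1 : toQ (x + (x + y₁ + y₂)) ∈ coneSpan ({x, x + y₁ + y₂} : Finset (NZ n)) :=
        toQ_add_mem_coneSpan_pair hxw
      have hm2 : toQ (x + (x + y₁ + y₂)) ∈ coneSpan ({x + y₁, x + y₂} : Finset (NZ n)) := by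
        rw [hr]
        exact toQ_add_mem_coneSpan_pair hz₁z₂
      have hdisj : ({x, x + y₁ + y₂} : Finset (NZ n)) ∩ {x + y₁, x + y₂} = ∅ :=
        pair_disjoint hxz₁' hxz₂' hwz₁ hwz₂
      have h0 := eq_zero_of_mem_coneSpan_disjoint F hc hc2 hdisj hm1 hm2
      exact pair_sum_ne_zero F hc hxw (toQ_eq_zero h0)
    · rcases prim_sum F hF hz₁ hz₂ hz₁z₂ hc2 with h0 | hg
      · exact pair_sum_ne_zero F hc hxw (by rw [hr]; exact h0)
      · exact pair_sum_not_gen F hc hxw (by rw [hr]; exact hg)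
  -- conclude via primitivity of {x, w}
  rcases prim_sum F hF hx hw hxw hncxw with h0 | hv
  · exact eq_neg_of_add_eq_zero_right h0
  · -- contradiction: consider the pair (y₁, w)
    exfalso
    have hy₁w : y₁ ≠ x + y₁ + y₂ := by
      intro h
      apply gens_ne_zero F hz₂
      funext i
      have a := congrFun h i
      simp only [Pi.add_apply, Pi.zero_apply] at a ⊢
      omega
    have hv' : x + (x + y₁ + y₂) ∈ F.gens := hv
    rcases pair_sum_cases F hF hx hy₁ hw hy₁w hz₁ hv' with h0' | ⟨hg', -⟩
    · -- x + y₁ + (x+y₁+y₂) = 0 ; but it equals (x+y₁) + w which is nonzero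
      have : (x + y₁) + (x + y₁ + y₂) = 0 := by
        funext i
        have a := congrFun h0' i
        simp only [Pi.add_apply, Pi.zero_apply] at a ⊢
        omega
      exact pair_sum_ne_zero F hzw hz₁w this
    · have : (x + y₁) + (x + y₁ + y₂) ∈ F.gens := by
        have heq : x + y₁ + (x + y₁ + y₂) = (x + y₁) + (x + y₁ + y₂) := rfl
        rwa [heq] at hg'
      exact pair_sum_not_gen F hzw hz₁w this

/-- strong dichotomy for two distinct z-type partners of `x`. -/
lemma strong_dichotomy (hF : IsFano F) {x y₁ y₂ : NZ n} (hx : x ∈ F.gens)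
    (hy₁ : y₁ ∈ F.gens) (hy₂ : y₂ ∈ F.gens)
    (hxy₁ : x ≠ y₁) (hxy₂ : x ≠ y₂) (h12 : y₁ ≠ y₂)
    (hp₁ : ({x, y₁} : Finset (NZ n)) ∉ F.cones)
    (hp₂ : ({x, y₂} : Finset (NZ n)) ∉ F.cones)
    (hz₁ : x + y₁ ∈ F.gens) (hz₂ : x + y₂ ∈ F.gens) :
    x + y₁ + y₂ = 0 ∨ x + y₁ + y₂ = -x := by
  rcases pair_sum_cases F hF hx hy₁ hy₂ h12 hz₁ hz₂ with h0 | ⟨hw, hpr | hpr⟩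
  · exact Or.inl h0
  · exact Or.inr (strong_aux F hF hx hy₁ hy₂ hxy₁ hxy₂ h12 hp₁ hp₂ hz₁ hz₂ hw hpr)
  · right
    have heq : x + y₂ + y₁ = x + y₁ + y₂ := by
      funext i; simp only [Pi.add_apply]; omega
    rw [← heq]
    exact strong_aux F hF hx hy₂ hy₁ hxy₂ hxy₁ h12.symm hp₂ hp₁ hz₂ hz₁
      (heq ▸ hw) hpr

/-- at most two z-type primitive partners. -/
lemma no_three_partners (hF : IsFano F) {x y₁ y₂ y₃ : NZ n} (hx : x ∈ F.gens)
    (hy₁ : y₁ ∈ F.gens) (hy₂ : y₂ ∈ F.gens) (hy₃ : y₃ ∈ F.gens)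
    (hxy₁ : x ≠ y₁) (hxy₂ : x ≠ y₂) (hxy₃ : x ≠ y₃)
    (h12 : y₁ ≠ y₂) (h13 : y₁ ≠ y₃) (h23 : y₂ ≠ y₃)
    (hp₁ : ({x, y₁} : Finset (NZ n)) ∉ F.cones)
    (hp₂ : ({x, y₂} : Finset (NZ n)) ∉ F.cones)
    (hp₃ : ({x, y₃} : Finset (NZ n)) ∉ F.cones)
    (hz₁ : x + y₁ ∈ F.gens) (hz₂ : x + y₂ ∈ F.gens) (hz₃ : x + y₃ ∈ F.gens) :
    False := by
  have d12 := strong_dichotomy F hF hx hy₁ hy₂ hxy₁ hxy₂ h12 hp₁ hp₂ hz₁ hz₂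
  have d13 := strong_dichotomy F hF hx hy₁ hy₃ hxy₁ hxy₃ h13 hp₁ hp₃ hz₁ hz₃
  have d23 := strong_dichotomy F hF hx hy₂ hy₃ hxy₂ hxy₃ h23 hp₂ hp₃ hz₂ hz₃
  rcases d12 with h | h <;> rcases d13 with h' | h' <;> rcases d23 with h'' | h''
  · exact h23 (by
      funext i
      have a := congrFun h i; have b := congrFun h' i
      simp only [Pi.add_apply, Pi.zero_apply] at a b ⊢; omega)
  · exact h23 (by
      funext i
      have a := congrFun h i; have b := congrFun h' i
      simp only [Pi.add_apply, Pi.zero_apply] at a b ⊢; omega)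
  · exact h13 (by
      funext i
      have a := congrFun h i; have b := congrFun h'' i
      simp only [Pi.add_apply, Pi.zero_apply] at a b ⊢; omega)
  · exact h12 (by
      funext i
      have a := congrFun h' i; have b := congrFun h'' i
      simp only [Pi.add_apply, Pi.zero_apply, Pi.neg_apply] at a b ⊢; omega)
  · exact h12 (by
      funext i
      have a := congrFun h' i; have b := congrFun h'' i
      simp only [Pi.add_apply, Pi.zero_apply, Pi.neg_apply] at a b ⊢; omega)
  · exact h13 (by
      funext i
      have a := congrFun h i; have b := congrFun h'' i
      simp only [Pi.add_apply, Pi.zero_apply, Pi.neg_apply] at a b ⊢; omega)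
  · exact h23 (by
      funext i
      have a := congrFun h i; have b := congrFun h' i
      simp only [Pi.add_apply, Pi.zero_apply, Pi.neg_apply] at a b ⊢; omega)
  · exact h23 (by
      funext i
      have a := congrFun h i; have b := congrFun h' i
      simp only [Pi.add_apply, Pi.neg_apply] at a b ⊢; omega)

end Combinatorics

section Count

variable {n : ℕ} (F : Fan n)

lemma primColl_pair_facts {x y : NZ n} (hx : x ∈ F.gens)
    (h : IsPrimColl F {x, y}) :
    y ∈ F.gens ∧ y ≠ x ∧ ({x, y} : Finset (NZ n)) ∉ F.cones := by
  obtain ⟨hsub, hnc, -⟩ := h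
  have hy : y ∈ F.gens := hsub (by simp)
  refine ⟨hy, ?_, hnc⟩
  rintro rfl
  exact hnc (by simpa [Finset.pair_eq_singleton] using F.gens_mem y hy)

lemma partner_cases (hF : IsFano F) {x y : NZ n} (hx : x ∈ F.gens)
    (h : IsPrimColl F {x, y}) : y = -x ∨ x + y ∈ F.gens := by
  obtain ⟨hy, hyx, hnc⟩ := primColl_pair_facts F hx h
  rcases prim_sum F hF hx hy (fun hh => hyx hh.symm) hnc with h0 | hg
  · exact Or.inl (eq_neg_of_add_eq_zero_right h0)
  · exact Or.inr hg

lemma S_ncard_le_three (hF : IsFano F) {x : NZ n} (hx : x ∈ F.gens) :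
    ({y | y ∈ F.gens ∧ IsPrimColl F {x, y}} : Set (NZ n)).ncard ≤ 3 := by
  classical
  have hclass : ∀ y ∈ ({y | y ∈ F.gens ∧ IsPrimColl F {x, y}} : Set (NZ n)),
      y = -x ∨ x + y ∈ F.gens := fun y hy => partner_cases F hF hx hy.2
  have htrip : ∀ y₁ ∈ ({y | y ∈ F.gens ∧ IsPrimColl F {x, y}} : Set (NZ n)),
      ∀ y₂ ∈ ({y | y ∈ F.gens ∧ IsPrimColl F {x, y}} : Set (NZ n)),
      ∀ y₃ ∈ ({y | y ∈ F.gens ∧ IsPrimColl F {x, y}} : Set (NZ n)),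
      y₁ ≠ y₂ → y₁ ≠ y₃ → y₂ ≠ y₃ →
      x + y₁ ∈ F.gens → x + y₂ ∈ F.gens → x + y₃ ∈ F.gens → False := by
    intro y₁ h1 y₂ h2 y₃ h3 h12 h13 h23 hg1 hg2 hg3
    obtain ⟨hm1, hne1, hnc1⟩ := primColl_pair_facts F hx h1.2
    obtain ⟨hm2, hne2, hnc2⟩ := primColl_pair_facts F hx h2.2
    obtain ⟨hm3, hne3, hnc3⟩ := primColl_pair_facts F hx h3.2
    exact no_three_partners F hF hx hm1 hm2 hm3 (fun h => hne1 h.symm)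
      (fun h => hne2 h.symm) (fun h => hne3 h.symm) h12 h13 h23 hnc1 hnc2 hnc3 hg1 hg2 hg3
  by_cases htwo : ∃ y₁ ∈ ({y | y ∈ F.gens ∧ IsPrimColl F {x, y}} : Set (NZ n)),
      ∃ y₂ ∈ ({y | y ∈ F.gens ∧ IsPrimColl F {x, y}} : Set (NZ n)),
      y₁ ≠ y₂ ∧ x + y₁ ∈ F.gens ∧ x + y₂ ∈ F.gens
  · obtain ⟨y₁, hy₁, y₂, hy₂, hne, hg1, hg2⟩ := htwo
    have hsub : ({y | y ∈ F.gens ∧ IsPrimColl F {x, y}} : Set (NZ n)) ⊆ {-x, y₁, y₂} := by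
      intro y hy
      rcases hclass y hy with h | h
      · exact Or.inl h
      · by_cases e1 : y = y₁
        · exact Or.inr (Or.inl e1)
        · by_cases e2 : y = y₂
          · exact Or.inr (Or.inr e2)
          · exact absurd (htrip y hy y₁ hy₁ y₂ hy₂ e1 e2 hne h hg1 hg2) not_false
    calc ({y | y ∈ F.gens ∧ IsPrimColl F {x, y}} : Set (NZ n)).ncard
        ≤ ({-x, y₁, y₂} : Set (NZ n)).ncard := Set.ncard_le_ncard hsub (Set.toFinite _)
      _ ≤ ({y₁, y₂} : Set (NZ n)).ncard + 1 := Set.ncard_insert_le _ _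
      _ ≤ (({y₂} : Set (NZ n)).ncard + 1) + 1 := by
          have := Set.ncard_insert_le y₁ ({y₂} : Set (NZ n))
          omega
      _ ≤ 3 := by rw [Set.ncard_singleton]
  · by_cases hone : ∃ y₀ ∈ ({y | y ∈ F.gens ∧ IsPrimColl F {x, y}} : Set (NZ n)),
        x + y₀ ∈ F.gens
    · obtain ⟨y₀, hy₀, hg0⟩ := hone
      have hsub : ({y | y ∈ F.gens ∧ IsPrimColl F {x, y}} : Set (NZ n)) ⊆ {-x, y₀} := by
        intro y hy
        rcases hclass y hy with h | h
        · exact Or.inl h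
        · by_cases e : y = y₀
          · exact Or.inr e
          · exact absurd ⟨y, hy, y₀, hy₀, e, h, hg0⟩ htwo
      calc ({y | y ∈ F.gens ∧ IsPrimColl F {x, y}} : Set (NZ n)).ncard
          ≤ ({-x, y₀} : Set (NZ n)).ncard := Set.ncard_le_ncard hsub (Set.toFinite _)
        _ ≤ ({y₀} : Set (NZ n)).ncard + 1 := Set.ncard_insert_le _ _
        _ ≤ 3 := by rw [Set.ncard_singleton]; omega
    · have hsub : ({y | y ∈ F.gens ∧ IsPrimColl F {x, y}} : Set (NZ n)) ⊆ {-x} := by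
        intro y hy
        rcases hclass y hy with h | h
        · exact h
        · exact absurd ⟨y, hy, h⟩ hone
      calc ({y | y ∈ F.gens ∧ IsPrimColl F {x, y}} : Set (NZ n)).ncard
          ≤ ({-x} : Set (NZ n)).ncard := Set.ncard_le_ncard hsub (Set.toFinite _)
        _ ≤ 3 := by rw [Set.ncard_singleton]; omega

lemma gens_card_split {x : NZ n} (hx : x ∈ F.gens) :
    F.gens.card = 1 +
      ({y | y ∈ F.gens ∧ y ≠ x ∧ ({x, y} : Finset (NZ n)) ∈ F.cones} : Set (NZ n)).ncard +
      ({y | y ∈ F.gens ∧ IsPrimColl F {x, y}} : Set (NZ n)).ncard := by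
  classical
  have hTfin : ({y | y ∈ F.gens ∧ y ≠ x ∧ ({x, y} : Finset (NZ n)) ∈ F.cones}
      : Set (NZ n)).Finite :=
    Set.Finite.subset F.gens.finite_toSet (fun y hy => hy.1)
  have hSfin : ({y | y ∈ F.gens ∧ IsPrimColl F {x, y}} : Set (NZ n)).Finite :=
    Set.Finite.subset F.gens.finite_toSet (fun y hy => hy.1)
  have hunion : (↑F.gens : Set (NZ n)) =
      (({x} : Set (NZ n)) ∪ {y | y ∈ F.gens ∧ y ≠ x ∧ ({x, y} : Finset (NZ n)) ∈ F.cones})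
        ∪ {y | y ∈ F.gens ∧ IsPrimColl F {x, y}} := by
    ext y
    simp only [Set.mem_union, Set.mem_singleton_iff, Set.mem_setOf_eq, Finset.mem_coe]
    constructor
    · intro hy
      by_cases e : y = x
      · exact Or.inl (Or.inl e)
      · by_cases hc : ({x, y} : Finset (NZ n)) ∈ F.cones
        · exact Or.inl (Or.inr ⟨hy, e, hc⟩)
        · refine Or.inr ⟨hy, ?_, hc, ?_⟩
          · intro v hv
            rcases Finset.mem_insert.1 hv with rfl | hv
            · exact hx
            · rw [Finset.mem_singleton] at hv
              subst hv
              exact hy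
          · intro Q hQ
            have hQsub := hQ.subset
            have h2 : ({x, y} : Finset (NZ n)).card = 2 := by
              rw [Finset.card_insert_of_notMem (by simp [Ne.symm e])]
              simp
            have hlt := Finset.card_lt_card hQ
            rw [h2] at hlt
            by_cases hq0 : Q.card = 0
            · rw [Finset.card_eq_zero.1 hq0]
              exact F.empty_mem
            · have hq1 : Q.card = 1 := by omega
              obtain ⟨a, rfl⟩ := Finset.card_eq_one.1 hq1
              have ha : a ∈ ({x, y} : Finset (NZ n)) := hQsub (by simp)
              have hag : a ∈ F.gens := by
                rcases Finset.mem_insert.1 ha with rfl | ha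
                · exact hx
                · rw [Finset.mem_singleton] at ha
                  subst ha
                  exact hy
              exact F.gens_mem a hag
    · intro hy
      rcases hy with (rfl | hy) | hy
      · exact hx
      · exact hy.1
      · exact hy.1
  have hd1 : Disjoint ({x} : Set (NZ n))
      ({y | y ∈ F.gens ∧ y ≠ x ∧ ({x, y} : Finset (NZ n)) ∈ F.cones} : Set (NZ n)) := by
    rw [Set.disjoint_left]
    rintro y rfl
    exact fun h => h.2.1 rfl
  have hd2 : Disjoint
      (({x} : Set (NZ n)) ∪ {y | y ∈ F.gens ∧ y ≠ x ∧ ({x, y} : Finset (NZ n)) ∈ F.cones})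
      ({y | y ∈ F.gens ∧ IsPrimColl F {x, y}} : Set (NZ n)) := by
    rw [Set.disjoint_left]
    rintro y (rfl | hyT) hyS
    · obtain ⟨-, hne, -⟩ := primColl_pair_facts F hx hyS.2
      exact hne rfl
    · exact hyS.2.2.1 hyT.2.2
  have h1 := Set.ncard_union_eq hd2 ((Set.finite_singleton x).union hTfin) hSfin
  have h2 := Set.ncard_union_eq hd1 (Set.finite_singleton x) hTfin
  rw [← Set.ncard_coe_finset, hunion, h1, h2, Set.ncard_singleton]

end Count

end ToricFano

namespace ToricFano

/-- In a Fano fan of dimension `n`, any generator `x` lies in at most three primitive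
collections of order two; for the invariant divisor `D = V(x)`, whose Picard number is
`ρ_D = #{y ∈ G(Σ) : y ≠ x, ⟨x,y⟩ ∈ Σ} - (n-1)`, one has `0 ≤ ρ_X - ρ_D ≤ 3` and
`ρ_X - ρ_D` equals the number of primitive collections of order two containing `x`. -/
theorem picard_drop_of_divisor {n : ℕ} (F : Fan n) (hF : IsFano F)
    (x : NZ n) (hx : x ∈ F.gens) :
    let S : Set (NZ n) := {y | y ∈ F.gens ∧ IsPrimColl F {x, y}}
    let ρX : ℤ := (F.gens.card : ℤ) - n
    let ρD : ℤ :=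
      (({y | y ∈ F.gens ∧ y ≠ x ∧ ({x, y} : Finset (NZ n)) ∈ F.cones} : Set (NZ n)).ncard : ℤ)
        - ((n : ℤ) - 1)
    S.ncard ≤ 3 ∧ ρX - ρD = S.ncard ∧ 0 ≤ ρX - ρD ∧ ρX - ρD ≤ 3 := by
  intro S ρX ρD
  have hS3 : ({y | y ∈ F.gens ∧ IsPrimColl F {x, y}} : Set (NZ n)).ncard ≤ 3 :=
    S_ncard_le_three F hF hx
  have hcount := gens_card_split F hx
  have hEq : ρX - ρD = (({y | y ∈ F.gens ∧ IsPrimColl F {x, y}} : Set (NZ n)).ncard : ℤ) := by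
    show (F.gens.card : ℤ) - n -
        ((({y | y ∈ F.gens ∧ y ≠ x ∧ ({x, y} : Finset (NZ n)) ∈ F.cones}
          : Set (NZ n)).ncard : ℤ) - ((n : ℤ) - 1)) = _
    omega
  exact ⟨hS3, hEq, by rw [hEq]; exact Int.natCast_nonneg _, by rw [hEq]; exact_mod_cast hS3⟩

end ToricFano
end

section
/- Let Σ be a Fano fan of dimension n, and set f₀ = #G(Σ) and f₁ = the number of 2-dimensional cones of Σ. Suppose that for every generator x ∈ G(Σ) there are at most two primitive collections of order two containing x, and that if there are exactly two, they are {x, −x} and {x, y} with −y ∉ G(Σ) and −x−y ∉ G(Σ). Then Σ has at most (3/4)·f₀ primitive collections of order two; that is, C(f₀,2) − f₁ ≤ (3/4)·f₀, where C(f₀,2) = f₀(f₀−1)/2. -/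
open Finset

namespace ToricFano

/-- A 2-element subset of the generators is a primitive collection iff it is not a cone. -/
lemma primColl_card_two_iff {n : ℕ} (F : Fan n) {P : Finset (NZ n)} (hP : P.card = 2) :
    IsPrimColl F P ↔ P ⊆ F.gens ∧ P ∉ F.cones := by
  constructor
  · rintro ⟨h1, h2, -⟩; exact ⟨h1, h2⟩
  · rintro ⟨h1, h2⟩
    refine ⟨h1, h2, fun Q hQ => ?_⟩
    have hcard : Q.card < 2 := hP ▸ Finset.card_lt_card hQ
    have : Q.card = 0 ∨ Q.card = 1 := by omega
    rcases this with h | h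
    · rw [Finset.card_eq_zero.mp h]; exact F.empty_mem
    · obtain ⟨x, rfl⟩ := Finset.card_eq_one.mp h
      exact F.gens_mem x (h1 (hQ.subset (Finset.mem_singleton_self x)))

/-- Any 2-element set containing `x` can be written as `{x, p}` with `p ≠ x`. -/
lemma edge_eq_pair {n : ℕ} {e : Finset (NZ n)} (he : e.card = 2) {x : NZ n} (hx : x ∈ e) :
    ∃ p, p ≠ x ∧ e = {x, p} := by
  obtain ⟨a, b, hab, rfl⟩ := Finset.card_eq_two.mp he
  rcases Finset.mem_insert.mp hx with rfl | hx
  · exact ⟨b, fun h => hab h.symm, rfl⟩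
  · rcases Finset.mem_singleton.mp hx with rfl
    exact ⟨a, hab, Finset.pair_comm a x⟩

/-- In a Fano fan where every generator `x` lies in at most two primitive collections of
order two, and when in exactly two they are `{x,-x}` and `{x,y}` with `-y ∉ G(Σ)` and
`-x-y ∉ G(Σ)`, the number of primitive collections of order two is at most `(3/4)·f₀`;
that is, `C(f₀,2) - f₁ ≤ (3/4)·f₀`. -/
theorem few_order_two_collections {n : ℕ} (F : Fan n) (hF : IsFano F)
    (hyp : ∀ x ∈ F.gens,
      (∀ p q r : NZ n, p ≠ q → p ≠ r → q ≠ r →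
        ¬(IsPrimColl F {x, p} ∧ IsPrimColl F {x, q} ∧ IsPrimColl F {x, r})) ∧
      (∀ p q : NZ n, p ≠ q → IsPrimColl F {x, p} → IsPrimColl F {x, q} →
        (p = -x ∧ -q ∉ F.gens ∧ -x - q ∉ F.gens) ∨
        (q = -x ∧ -p ∉ F.gens ∧ -x - p ∉ F.gens))) :
    let f₀ := F.gens.card
    let f₁ := (F.cones.filter (fun σ => σ.card = 2)).card
    ((f₀.choose 2 : ℚ) - (f₁ : ℚ) ≤ 3 / 4 * (f₀ : ℚ)) ∧
    ((f₀.choose 2 : ℤ) - (f₁ : ℤ) =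
      (({P : Finset (NZ n) | IsPrimColl F P ∧ P.card = 2} : Set (Finset (NZ n))).ncard : ℤ)) := by
  classical
  intro f₀ f₁
  set G := F.gens with hG
  set E : Finset (Finset (NZ n)) :=
    (G.powersetCard 2).filter (fun P => P ∉ F.cones) with hE
  -- membership in E
  have hmemE : ∀ P : Finset (NZ n), P ∈ E ↔ (IsPrimColl F P ∧ P.card = 2) := by
    intro P
    rw [hE, Finset.mem_filter, Finset.mem_powersetCard]
    constructor
    · rintro ⟨⟨hsub, hcard⟩, hnc⟩
      exact ⟨(primColl_card_two_iff F hcard).mpr ⟨hsub, hnc⟩, hcard⟩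
    · rintro ⟨hcoll, hcard⟩
      exact ⟨⟨hcoll.1, hcard⟩, hcoll.2.1⟩
  -- counting: choose 2 = f₁ + E.card
  have hsplit : f₀.choose 2 = f₁ + E.card := by
    have h1 : ((G.powersetCard 2).filter (fun P => P ∈ F.cones)).card
        + ((G.powersetCard 2).filter (fun P => P ∉ F.cones)).card
        = (G.powersetCard 2).card := Finset.card_filter_add_card_filter_not _
    have h2 : (G.powersetCard 2).filter (fun P => P ∈ F.cones)
        = F.cones.filter (fun σ => σ.card = 2) := by
      ext P
      simp only [Finset.mem_filter, Finset.mem_powersetCard]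
      constructor
      · rintro ⟨⟨-, hc⟩, hm⟩; exact ⟨hm, hc⟩
      · rintro ⟨hm, hc⟩; exact ⟨⟨F.cones_subset P hm, hc⟩, hm⟩
    rw [h2] at h1
    rw [Finset.card_powersetCard] at h1
    simpa [f₁, f₀, hE] using h1.symm
  -- the set of primitive collections of order two is ↑E
  have hset : ({P : Finset (NZ n) | IsPrimColl F P ∧ P.card = 2} : Set (Finset (NZ n)))
      = (E : Set (Finset (NZ n))) := by
    ext P; simpa using (hmemE P).symm
  have hncard : ({P : Finset (NZ n) | IsPrimColl F P ∧ P.card = 2} :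
      Set (Finset (NZ n))).ncard = E.card := by
    rw [hset, Set.ncard_coe_finset]
  -- edges are primitive collections of card 2
  have hEprim : ∀ e ∈ E, IsPrimColl F e ∧ e.card = 2 := fun e he => (hmemE e).mp he
  -- degree function
  set d : NZ n → ℕ := fun x => (E.filter (fun e => x ∈ e)).card with hd
  -- extraction of an edge at x
  have hedge : ∀ x : NZ n, ∀ e ∈ E, x ∈ e →
      ∃ p, p ≠ x ∧ e = {x, p} ∧ IsPrimColl F ({x, p} : Finset (NZ n)) ∧ p ∈ G := by
    intro x e he hx
    obtain ⟨hprim, hcard⟩ := hEprim e he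
    obtain ⟨p, hpx, hep⟩ := edge_eq_pair hcard hx
    refine ⟨p, hpx, hep, hep ▸ hprim, ?_⟩
    have : p ∈ e := by rw [hep]; exact Finset.mem_insert_of_mem (Finset.mem_singleton_self p)
    exact (hep ▸ hprim).1 (hep ▸ this)
  -- degrees are at most 2
  have hdeg2 : ∀ x ∈ G, d x ≤ 2 := by
    intro x hx
    by_contra hcon
    push_neg at hcon
    obtain ⟨e1, e2, e3, he1, he2, he3, h12, h13, h23⟩ :=
      Finset.two_lt_card_iff.mp hcon
    rw [Finset.mem_filter] at he1 he2 he3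
    obtain ⟨p, hpx, hep, hcp, -⟩ := hedge x e1 he1.1 he1.2
    obtain ⟨q, hqx, heq, hcq, -⟩ := hedge x e2 he2.1 he2.2
    obtain ⟨r, hrx, her, hcr, -⟩ := hedge x e3 he3.1 he3.2
    have hpq : p ≠ q := fun h => h12 (by rw [hep, heq, h])
    have hpr : p ≠ r := fun h => h13 (by rw [hep, her, h])
    have hqr : q ≠ r := fun h => h23 (by rw [heq, her, h])
    exact (hyp x hx).1 p q r hpq hpr hqr ⟨hcp, hcq, hcr⟩
  -- if -y ∉ gens then d y ≤ 1
  have hdegy : ∀ y : NZ n, y ∈ G → -y ∉ F.gens → d y ≤ 1 := by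
    intro y hy hny
    by_contra hcon
    push_neg at hcon
    obtain ⟨e1, e2, he1, he2, h12⟩ := Finset.one_lt_card_iff.mp hcon
    rw [Finset.mem_filter] at he1 he2
    obtain ⟨a, hax, hea, hca, haG⟩ := hedge y e1 he1.1 he1.2
    obtain ⟨b, hbx, heb, hcb, hbG⟩ := hedge y e2 he2.1 he2.2
    have hab : a ≠ b := fun h => h12 (by rw [hea, heb, h])
    rcases (hyp y hy).2 a b hab hca hcb with ⟨rfl, -, -⟩ | ⟨rfl, -, -⟩
    · exact hny haG
    · exact hny hbG
  -- special neighbor of a degree-2 vertex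
  have hspecial : ∀ x ∈ G, d x = 2 →
      ∃ y, y ∈ G ∧ ({x, y} : Finset (NZ n)) ∈ E ∧ -y ∉ F.gens := by
    intro x hx hdx
    have : 1 < d x := by omega
    obtain ⟨e1, e2, he1, he2, h12⟩ := Finset.one_lt_card_iff.mp this
    rw [Finset.mem_filter] at he1 he2
    obtain ⟨p, hpx, hep, hcp, hpG⟩ := hedge x e1 he1.1 he1.2
    obtain ⟨q, hqx, heq, hcq, hqG⟩ := hedge x e2 he2.1 he2.2
    have hpq : p ≠ q := fun h => h12 (by rw [hep, heq, h])
    rcases (hyp x hx).2 p q hpq hcp hcq with ⟨-, hnq, -⟩ | ⟨-, hnp, -⟩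
    · exact ⟨q, hqG, heq ▸ he2.1, hnq⟩
    · exact ⟨p, hpG, hep ▸ he1.1, hnp⟩
  -- the two degree classes
  set D2 : Finset (NZ n) := G.filter (fun x => d x = 2) with hD2
  set D1 : Finset (NZ n) := G.filter (fun x => d x = 1) with hD1
  -- injection from D2 into D1
  have hD2D1 : D2.card ≤ D1.card := by
    set f : NZ n → NZ n := fun x =>
      if h : ∃ y, y ∈ G ∧ ({x, y} : Finset (NZ n)) ∈ E ∧ -y ∉ F.gens
      then h.choose else x with hf
    have hfx : ∀ x ∈ D2, (f x) ∈ G ∧ ({x, f x} : Finset (NZ n)) ∈ E ∧ -(f x) ∉ F.gens := by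
      intro x hxD
      rw [hD2, Finset.mem_filter] at hxD
      have h := hspecial x hxD.1 hxD.2
      rw [hf]; simp only [h, dif_pos]
      exact h.choose_spec
    have hfd : ∀ x ∈ D2, d (f x) = 1 := by
      intro x hxD
      obtain ⟨hyG, heE, hny⟩ := hfx x hxD
      have h1 : 1 ≤ d (f x) := by
        refine Finset.card_pos.mpr ⟨{x, f x}, ?_⟩
        rw [Finset.mem_filter]
        exact ⟨heE, Finset.mem_insert_of_mem (Finset.mem_singleton_self _)⟩
      have h2 := hdegy (f x) hyG hny
      omega
    refine Finset.card_le_card_of_injOn f (fun x hxD => ?_) ?_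
    · obtain ⟨hyG, -, -⟩ := hfx x hxD
      rw [hD1, Finset.mem_coe, Finset.mem_filter]
      exact ⟨hyG, hfd x hxD⟩
    · intro x hx x' hx' hxx
      by_contra hne
      obtain ⟨-, heE, -⟩ := hfx x hx
      obtain ⟨-, heE', -⟩ := hfx x' hx'
      rw [hxx] at heE
      set y := f x' with hy
      have hxy : x ≠ y := by
        intro h
        have := (hEprim _ heE).2
        rw [← h] at this
        simp at this
      have hx'y : x' ≠ y := by
        intro h
        have := (hEprim _ heE').2
        rw [← h] at this
        simp at this
      have hdist : ({x, y} : Finset (NZ n)) ≠ {x', y} := by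
        intro h
        have : x ∈ ({x', y} : Finset (NZ n)) := h ▸ Finset.mem_insert_self x {y}
        rcases Finset.mem_insert.mp this with h' | h'
        · exact hne h'
        · exact hxy (Finset.mem_singleton.mp h')
      have h2 : 1 < d y := by
        refine Finset.one_lt_card_iff.mpr ⟨{x, y}, {x', y}, ?_, ?_, hdist⟩ <;>
          rw [Finset.mem_filter] <;>
          exact ⟨by assumption, Finset.mem_insert_of_mem (Finset.mem_singleton_self _)⟩
      have h3 := hfd x' hx'
      rw [← hy] at h3
      omega
  -- sum of degrees equals twice the number of edges
  have hsum : ∑ x ∈ G, d x = 2 * E.card := by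
    rw [hd]
    simp only [Finset.card_filter]
    rw [Finset.sum_comm]
    have : ∀ e ∈ E, (∑ x ∈ G, if x ∈ e then 1 else 0) = 2 := by
      intro e he
      rw [← Finset.card_filter]
      have hsub : e ⊆ G := (hEprim e he).1.1
      have : G.filter (fun x => x ∈ e) = e := by
        ext x
        simp only [Finset.mem_filter]
        exact ⟨fun h => h.2, fun h => ⟨hsub h, h⟩⟩
      rw [this, (hEprim e he).2]
    rw [Finset.sum_congr rfl this, Finset.sum_const, smul_eq_mul, mul_comm]
  -- sum of degrees is at most 2|D2| + |D1|
  have hbound : ∑ x ∈ G, d x ≤ 2 * D2.card + D1.card := by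
    rw [← Finset.sum_filter_add_sum_filter_not G (fun x => d x = 2) d]
    have hA : ∑ x ∈ G.filter (fun x => d x = 2), d x = 2 * D2.card := by
      rw [Finset.sum_congr rfl (fun x hx => (Finset.mem_filter.mp hx).2),
        Finset.sum_const, smul_eq_mul, mul_comm, hD2]
    have hB : ∑ x ∈ G.filter (fun x => ¬ d x = 2), d x ≤ D1.card := by
      calc ∑ x ∈ G.filter (fun x => ¬ d x = 2), d x
          ≤ ∑ x ∈ G.filter (fun x => ¬ d x = 2), if d x = 1 then 1 else 0 := by
            refine Finset.sum_le_sum (fun x hx => ?_)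
            rw [Finset.mem_filter] at hx
            have := hdeg2 x hx.1
            have h2 := hx.2
            split <;> omega
        _ = ((G.filter (fun x => ¬ d x = 2)).filter (fun x => d x = 1)).card := by
            rw [Finset.card_filter]
        _ ≤ D1.card := by
            refine Finset.card_le_card (fun x hx => ?_)
            rw [Finset.mem_filter] at hx ⊢
            rw [Finset.mem_filter] at hx
            exact ⟨hx.1.1, hx.2⟩
      
    omega
  -- D2 and D1 are disjoint subsets of G
  have hDG : D2.card + D1.card ≤ f₀ := by
    have hdisj : Disjoint D2 D1 := by
      rw [Finset.disjoint_left]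
      intro x hx2 hx1
      rw [hD2, Finset.mem_filter] at hx2
      rw [hD1, Finset.mem_filter] at hx1
      omega
    calc D2.card + D1.card = (D2 ∪ D1).card := (Finset.card_union_of_disjoint hdisj).symm
      _ ≤ G.card := Finset.card_le_card (Finset.union_subset
          (Finset.filter_subset _ _) (Finset.filter_subset _ _))
  -- final count: 4 * E.card ≤ 3 * f₀
  have hmain : 4 * E.card ≤ 3 * f₀ := by omega
  constructor
  · have hchoose : (f₀.choose 2 : ℚ) = (f₁ : ℚ) + (E.card : ℚ) := by
      rw [hsplit]; push_cast; ring
    have h4 : (E.card : ℚ) ≤ 3 / 4 * (f₀ : ℚ) := by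
      have : (4 * E.card : ℚ) ≤ 3 * f₀ := by exact_mod_cast hmain
      linarith
    linarith
  · rw [hncard, hsplit]; push_cast; ring

end ToricFano
end
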